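/- arXiv:0705.3920 — 3 statements merged into one kernel-verified Lean document; each statement's English description precedes it below -/
import Mathlib

section
/- Let C be a convex cone in ℝⁿ with l(C) ≠ {0}. Then the closure of C decomposes as the Minkowski sum (cl(C) ∩ l(C)^⊥) + l(C), and moreover cl(C) ∩ l(C)^⊥ is a line-free convex cone. -/
open Pointwise

/-- Decomposition theorem: if `l(C) ≠ {0}`, then
`cl C = (cl C ∩ l(C)^⊥) + l(C)` and `cl C ∩ l(C)^⊥` is a line-free convex cone. -/
theorem stmt2 (n : ℕ) (C : Set (EuclideanSpace ℝ (Fin n)))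
    (hcone : ∀ x ∈ C, ∀ a : ℝ, 0 < a → a • x ∈ C)
    (hconv : Convex ℝ C)
    (L : Submodule ℝ (EuclideanSpace ℝ (Fin n)))
    (hL : (L : Set (EuclideanSpace ℝ (Fin n))) ⊆ closure C)
    (hmax : ∀ L' : Submodule ℝ (EuclideanSpace ℝ (Fin n)),
      (L' : Set (EuclideanSpace ℝ (Fin n))) ⊆ closure C → L' ≤ L)
    (hne : L ≠ ⊥) :
    closure C = (closure C ∩ (Lᗮ : Set (EuclideanSpace ℝ (Fin n))))
        + (L : Set (EuclideanSpace ℝ (Fin n))) ∧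
    Convex ℝ (closure C ∩ (Lᗮ : Set (EuclideanSpace ℝ (Fin n)))) ∧
    (∀ x ∈ closure C ∩ (Lᗮ : Set (EuclideanSpace ℝ (Fin n))), ∀ a : ℝ, 0 < a →
      a • x ∈ closure C ∩ (Lᗮ : Set (EuclideanSpace ℝ (Fin n)))) ∧
    ¬ ∃ (x z : EuclideanSpace ℝ (Fin n)), z ≠ 0 ∧
      ∀ t : ℝ, x + t • z ∈ closure C ∩ (Lᗮ : Set (EuclideanSpace ℝ (Fin n))) := by
  have hDconv : Convex ℝ (closure C) := hconv.closure
  -- closure C is a cone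
  have hDcone : ∀ x ∈ closure C, ∀ a : ℝ, 0 < a → a • x ∈ closure C := by
    intro x hx a ha
    have h1 : a • x ∈ (fun y => a • y) '' closure C := ⟨x, hx, rfl⟩
    have h2 : (fun y => a • y) '' closure C ⊆ closure ((fun y => a • y) '' C) :=
      image_closure_subset_closure_image (continuous_const_smul a)
    have h3 : (fun y => a • y) '' C ⊆ C := by
      rintro _ ⟨y, hy, rfl⟩
      exact hcone y hy a ha
    exact closure_mono h3 (h2 h1)
  -- adding an element of L stays in closure C
  have hadd : ∀ x ∈ closure C, ∀ u ∈ L, x + u ∈ closure C := by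
    intro x hx u hu
    have huD : u ∈ closure C := hL hu
    have hmid : (1/2 : ℝ) • x + (1/2 : ℝ) • u ∈ closure C :=
      hDconv hx huD (by norm_num) (by norm_num) (by norm_num)
    have h2 := hDcone _ hmid 2 (by norm_num)
    have heq : (2:ℝ) • ((1/2 : ℝ) • x + (1/2 : ℝ) • u) = x + u := by
      rw [smul_add, smul_smul, smul_smul]
      norm_num
    rwa [heq] at h2
  -- multiples of z lie in closure C when a whole line in direction z does
  have hline : ∀ x z : EuclideanSpace ℝ (Fin n),
      (∀ t : ℝ, x + t • z ∈ closure C) → ∀ t : ℝ, t • z ∈ closure C := by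
    intro x z h t
    have hclosed : IsClosed (closure C) := isClosed_closure
    have hlim0 : Filter.Tendsto (fun m : ℕ => ((m:ℝ)+1)⁻¹ • x + t • z)
        Filter.atTop (nhds (t • z)) := by
      have h0 : Filter.Tendsto (fun m : ℕ => ((m:ℝ)+1)⁻¹) Filter.atTop (nhds 0) := by
        simpa [one_div] using (tendsto_one_div_add_atTop_nhds_zero_nat (𝕜 := ℝ))
      have hlim : Filter.Tendsto (fun m : ℕ => ((m:ℝ)+1)⁻¹ • x + t • z) Filter.atTop
          (nhds ((0:ℝ) • x + t • z)) :=
        Filter.Tendsto.add (h0.smul_const x) tendsto_const_nhds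
      simpa using hlim
    refine hclosed.mem_of_tendsto hlim0 (Filter.Eventually.of_forall (fun m => ?_))
    ·
      have hpos : (0:ℝ) < ((m:ℝ)+1)⁻¹ := by positivity
      have hmem : x + (((m:ℝ)+1) * t) • z ∈ closure C := h _
      have h2 := hDcone _ hmem _ hpos
      have heq : ((m:ℝ)+1)⁻¹ • (x + (((m:ℝ)+1) * t) • z)
          = ((m:ℝ)+1)⁻¹ • x + t • z := by
        rw [smul_add, smul_smul]
        congr 1
        rw [← mul_assoc, inv_mul_cancel₀ (by positivity), one_mul]
      rwa [heq] at h2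
  refine ⟨?_, ?_, ?_, ?_⟩
  · -- decomposition
    ext x
    constructor
    · intro hx
      have hperp : x - (L.orthogonalProjectionOnto x : EuclideanSpace ℝ (Fin n)) ∈ Lᗮ :=
        L.sub_starProjection_mem_orthogonal x
      refine Set.mem_add.mpr
        ⟨x - (L.orthogonalProjectionOnto x : EuclideanSpace ℝ (Fin n)), ⟨?_, hperp⟩,
        (L.orthogonalProjectionOnto x : EuclideanSpace ℝ (Fin n)),
        (L.orthogonalProjectionOnto x).2, by abel⟩
      have h2 := hadd x hx (-(L.orthogonalProjectionOnto x : EuclideanSpace ℝ (Fin n)))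
        (L.neg_mem (L.orthogonalProjectionOnto x).2)
      simpa [sub_eq_add_neg] using h2
    · rintro ⟨a, ⟨haD, -⟩, b, hb, rfl⟩
      exact hadd a haD b hb
  · exact hDconv.inter (Lᗮ.convex)
  · intro x hx a ha
    exact ⟨hDcone x hx.1 a ha, Lᗮ.smul_mem a hx.2⟩
  · rintro ⟨x, z, hz, hxz⟩
    have hzperp : z ∈ Lᗮ := by
      have h1 := (hxz 1).2
      have h0 := (hxz 0).2
      have h2 := Lᗮ.sub_mem h1 h0
      simpa using h2
    have hzD : ∀ t : ℝ, t • z ∈ closure C := hline x z (fun t => (hxz t).1)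
    have hsub : ((L ⊔ Submodule.span ℝ {z} :
        Submodule ℝ (EuclideanSpace ℝ (Fin n))) :
        Set (EuclideanSpace ℝ (Fin n))) ⊆ closure C := by
      intro w hw
      rcases Submodule.mem_sup.mp hw with ⟨u, hu, v, hv, rfl⟩
      rcases Submodule.mem_span_singleton.mp hv with ⟨t, rfl⟩
      have h2 := hadd (t • z) (hzD t) u hu
      rwa [add_comm] at h2
    have hle := hmax _ hsub
    have hzL : z ∈ L := hle (Submodule.mem_sup_right
      (Submodule.mem_span_singleton_self z))
    have hbot : z ∈ (⊥ : Submodule ℝ (EuclideanSpace ℝ (Fin n))) :=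
      (Submodule.orthogonal_disjoint L).le_bot ⟨hzL, hzperp⟩
    exact hz (Submodule.mem_bot _ |>.mp hbot)
end

section
/- If P is a polyhedral cone in ℝⁿ (a finite intersection of closed linear halfspaces), then its dual cone P* is also a polyhedral cone. -/
open Finset RealInnerProductSpace

lemma fm_aux {ι : Type} [Fintype ι] (a b : ι → ℝ) :
    (∃ t : ℝ, 0 ≤ t ∧ ∀ j, b j - t * a j ≤ 0) ↔
      ((∀ j : {j : ι // a j ≤ 0}, b j.1 ≤ 0) ∧
       ∀ p : {j : ι // 0 < a j} × {j : ι // a j < 0},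
         a p.1.1 * b p.2.1 - a p.2.1 * b p.1.1 ≤ 0) := by
  classical
  constructor
  · rintro ⟨t, ht, h⟩
    constructor
    · rintro ⟨j, hj⟩
      have := h j
      nlinarith [mul_nonneg ht (neg_nonneg.2 hj)]
    · rintro ⟨⟨j, hj⟩, ⟨k, hk⟩⟩
      have h1 := h j
      have h2 := h k
      nlinarith
  · rintro ⟨h1, h2⟩
    set s : Finset ℝ := insert 0 ((univ.filter fun j => 0 < a j).image fun j => b j / a j) with hs
    have hne : s.Nonempty := ⟨0, mem_insert_self _ _⟩
    refine ⟨s.max' hne, le_max' s 0 (mem_insert_self _ _), ?_⟩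
    intro j
    rcases lt_trichotomy (a j) 0 with hj | hj | hj
    · -- need b j ≤ t * a j; show t ≤ b j / a j
      have hle : s.max' hne ≤ b j / a j := by
        apply max'_le
        intro y hy
        rcases mem_insert.1 hy with rfl | hy
        · rw [le_div_iff_of_neg hj]
          simpa using h1 ⟨j, hj.le⟩
        · obtain ⟨i, hi, rfl⟩ := mem_image.1 hy
          have hai : 0 < a i := (mem_filter.1 hi).2
          have := h2 ⟨⟨i, hai⟩, ⟨j, hj⟩⟩
          rw [le_div_iff_of_neg hj, div_mul_eq_mul_div, le_div_iff₀ hai]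
          nlinarith
      have hmul := mul_le_mul_of_nonpos_right hle hj.le
      rw [div_mul_cancel₀ _ hj.ne] at hmul
      linarith
    · have := h1 ⟨j, hj.le⟩
      rw [hj]; linarith
    · have hmem : b j / a j ∈ s := by
        apply mem_insert_of_mem
        exact mem_image.2 ⟨j, mem_filter.2 ⟨mem_univ _, hj⟩, rfl⟩
      have hle : b j / a j ≤ s.max' hne := le_max' _ _ hmem
      have hmul := mul_le_mul_of_nonneg_right hle hj.le
      rw [div_mul_cancel₀ _ hj.ne'] at hmul
      linarith

lemma weyl (n m : ℕ) (v : Fin m → EuclideanSpace ℝ (Fin n)) :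
    ∃ (ι : Type) (_ : Fintype ι) (w : ι → EuclideanSpace ℝ (Fin n)),
      {x : EuclideanSpace ℝ (Fin n) |
          ∃ c : Fin m → ℝ, (∀ i, 0 ≤ c i) ∧ x = ∑ i, c i • v i} =
        {x : EuclideanSpace ℝ (Fin n) | ∀ j, ⟪w j, x⟫ ≤ 0} := by
  classical
  induction m with
  | zero =>
    refine ⟨Fin n ⊕ Fin n, inferInstance,
      Sum.elim (fun i => EuclideanSpace.single i 1) (fun i => -EuclideanSpace.single i 1), ?_⟩
    ext x
    simp only [Set.mem_setOf_eq]
    constructor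
    · rintro ⟨c, -, rfl⟩ j
      cases j with
      | inl i => simp
      | inr i => simp
    · intro h
      refine ⟨fun i => 0, fun i => le_rfl, ?_⟩
      have hx : x = 0 := by
        ext i
        have h1 := h (Sum.inl i)
        have h2 := h (Sum.inr i)
        simp [EuclideanSpace.inner_single_left] at h1 h2
        simpa using le_antisymm h1 (by linarith)
      simp [hx]
  | succ m ih =>
    obtain ⟨ι, _, w, hw⟩ := ih (fun i => v i.castSucc)
    set vm := v (Fin.last m) with hvm
    set a : ι → ℝ := fun j => ⟪w j, vm⟫ with ha
    refine ⟨{j : ι // a j ≤ 0} ⊕ ({j : ι // 0 < a j} × {j : ι // a j < 0}), inferInstance,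
      Sum.elim (fun j => w j.1) (fun p => a p.1.1 • w p.2.1 - a p.2.1 • w p.1.1), ?_⟩
    have hwiff : ∀ y : EuclideanSpace ℝ (Fin n),
        (∃ c : Fin m → ℝ, (∀ i, 0 ≤ c i) ∧ y = ∑ i, c i • v i.castSucc) ↔
          ∀ j, ⟪w j, y⟫ ≤ 0 := fun y => Set.ext_iff.1 hw y
    have step : ∀ x : EuclideanSpace ℝ (Fin n),
        (∃ c : Fin (m+1) → ℝ, (∀ i, 0 ≤ c i) ∧ x = ∑ i, c i • v i) ↔
          ∃ t : ℝ, 0 ≤ t ∧ ∀ j, ⟪w j, x⟫ - t * a j ≤ 0 := by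
      intro x
      constructor
      · rintro ⟨c, hc, rfl⟩
        refine ⟨c (Fin.last m), hc _, ?_⟩
        have hmem : (∑ i, c i • v i) - c (Fin.last m) • vm =
            ∑ i : Fin m, c i.castSucc • v i.castSucc := by
          rw [Fin.sum_univ_castSucc]
          abel
        intro j
        have h2 := (hwiff _).1 ⟨fun i => c i.castSucc, fun i => hc _, by exact hmem⟩ j
        rw [inner_sub_right, real_inner_smul_right] at h2
        linarith
      · rintro ⟨t, ht, hle⟩
        obtain ⟨c, hc, hxc⟩ := (hwiff (x - t • vm)).2 (fun j => by
          have := hle j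
          rw [inner_sub_right, real_inner_smul_right]
          linarith)
        refine ⟨Fin.snoc c t, fun i => ?_, ?_⟩
        · induction i using Fin.lastCases with
          | last => simpa using ht
          | cast i => simpa using hc i
        · rw [Fin.sum_univ_castSucc]
          simp only [Fin.snoc_castSucc, Fin.snoc_last]
          rw [← hxc]
          abel
    ext x
    simp only [Set.mem_setOf_eq]
    rw [step x, fm_aux a (fun j => ⟪w j, x⟫)]
    constructor
    · rintro ⟨h1, h2⟩ j
      cases j with
      | inl j => exact h1 j
      | inr p =>
        have h3 := h2 p
        simp only [Sum.elim_inr]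
        rw [inner_sub_left, real_inner_smul_left, real_inner_smul_left]
        linarith
    · intro h
      refine ⟨fun j => h (Sum.inl j), fun p => ?_⟩
      have h3 := h (Sum.inr p)
      simp only [Sum.elim_inr] at h3
      rw [inner_sub_left, real_inner_smul_left, real_inner_smul_left] at h3
      linarith

/-- The dual cone of a polyhedral cone (a finite intersection of closed linear
halfspaces) in `ℝⁿ` is again a polyhedral cone (in the dual space). -/
theorem stmt7 (n m : ℕ) (f : Fin m → StrongDual ℝ (EuclideanSpace ℝ (Fin n)))
    (hf : ∀ i, f i ≠ 0)
    (P : Set (EuclideanSpace ℝ (Fin n)))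
    (hP : P = ⋂ i, {x : EuclideanSpace ℝ (Fin n) | f i x ≤ 0}) :
    ∃ (k : ℕ) (g : Fin k → StrongDual ℝ (StrongDual ℝ (EuclideanSpace ℝ (Fin n)))),
      (∀ j, g j ≠ 0) ∧
      {u : StrongDual ℝ (EuclideanSpace ℝ (Fin n)) | ∀ x ∈ P, u x ≤ 0} =
        ⋂ j, {u : StrongDual ℝ (EuclideanSpace ℝ (Fin n)) | g j u ≤ 0} := by
  classical
  let φ := InnerProductSpace.toDual ℝ (EuclideanSpace ℝ (Fin n))
  let v : Fin m → EuclideanSpace ℝ (Fin n) := fun i => φ.symm (f i)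
  have hfv : ∀ i (x : EuclideanSpace ℝ (Fin n)), f i x = ⟪v i, x⟫ := fun i x =>
    (InnerProductSpace.toDual_symm_apply).symm
  obtain ⟨ι, _, w, hw⟩ := weyl n m v
  have hviff : ∀ y : EuclideanSpace ℝ (Fin n),
      (∃ c : Fin m → ℝ, (∀ i, 0 ≤ c i) ∧ y = ∑ i, c i • v i) ↔
        ∀ j, ⟪w j, y⟫ ≤ 0 := fun y => Set.ext_iff.1 hw y
  -- each w j belongs to P
  have hwP : ∀ j, w j ∈ P := by
    intro j
    rw [hP]
    simp only [Set.mem_iInter, Set.mem_setOf_eq]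
    intro i
    rw [hfv]
    have hvi : ∃ c : Fin m → ℝ, (∀ i', 0 ≤ c i') ∧ v i = ∑ i', c i' • v i' := by
      refine ⟨fun i' => if i' = i then 1 else 0, fun i' => by positivity, ?_⟩
      simp [ite_smul]
    have := (hviff (v i)).1 hvi j
    rwa [real_inner_comm]
  -- the key characterization of the dual cone
  have key : ∀ u : StrongDual ℝ (EuclideanSpace ℝ (Fin n)),
      (∀ x ∈ P, u x ≤ 0) ↔ ∀ j, u (w j) ≤ 0 := by
    intro u
    constructor
    · intro h j
      exact h _ (hwP j)
    · intro h x hx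
      have hu : ∀ j, ⟪w j, φ.symm u⟫ ≤ 0 := by
        intro j
        rw [real_inner_comm, InnerProductSpace.toDual_symm_apply]
        exact h j
      obtain ⟨c, hc, hcu⟩ := (hviff (φ.symm u)).2 hu
      have hux : u x = ⟪φ.symm u, x⟫ := (InnerProductSpace.toDual_symm_apply).symm
      rw [hux, hcu, sum_inner]
      apply Finset.sum_nonpos
      intro i _
      rw [real_inner_smul_left]
      have hx' : f i x ≤ 0 := by
        rw [hP] at hx
        exact Set.mem_iInter.1 hx i
      rw [hfv] at hx'
      exact mul_nonpos_of_nonneg_of_nonpos (hc i) hx'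
  -- filter out the zero vectors among the w j
  let ι' := {j : ι // w j ≠ 0}
  let e : Fin (Fintype.card ι') ≃ ι' := (Fintype.equivFin ι').symm
  refine ⟨Fintype.card ι',
    fun j => NormedSpace.inclusionInDoubleDual ℝ (EuclideanSpace ℝ (Fin n)) (w (e j).1),
    ?_, ?_⟩
  · intro j hg
    replace hg : NormedSpace.inclusionInDoubleDual ℝ (EuclideanSpace ℝ (Fin n)) (w (e j).1)
        = 0 := hg
    have h0 : (NormedSpace.inclusionInDoubleDual ℝ (EuclideanSpace ℝ (Fin n)) (w (e j).1))
        (φ (w (e j).1)) = 0 := by rw [hg]; rfl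
    rw [NormedSpace.dual_def, InnerProductSpace.toDual_apply_apply] at h0
    exact (e j).2 (inner_self_eq_zero.1 h0)
  · ext u
    simp only [Set.mem_setOf_eq, Set.mem_iInter]
    rw [key u]
    constructor
    · intro h j
      rw [NormedSpace.dual_def]
      exact h _
    · intro h j
      by_cases hwj : w j = 0
      · rw [hwj]
        simp
      · have := h (e.symm ⟨j, hwj⟩)
        rw [NormedSpace.dual_def] at this
        simpa [e] using this
end

section
/- Let P be an n-dimensional polyhedral cone in ℝⁿ, let f be a face of P, and let e be a face of f. Define f_{(e;P)} = Lk(e;P) ∩ L(f), where L(f) is the linear span of f and Lk(e;P) is the link of e in P. Then f_{(e;P)} is a face of the polytopal cone Lk(e;P); moreover, if f is a facet of P then f_{(e;P)} is a facet of Lk(e;P). -/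
open scoped RealInnerProductSpace

/-- A (nonempty, proper) face of a convex cone `C ⊆ ℝⁿ`: the intersection of `C` with a
supporting hyperplane. -/
def IsFaceCone (n : ℕ) (C f : Set (EuclideanSpace ℝ (Fin n))) : Prop :=
  f.Nonempty ∧ f ≠ C ∧ ∃ w : EuclideanSpace ℝ (Fin n), w ≠ 0 ∧
    (∀ x ∈ C, ⟪w, x⟫ ≤ 0) ∧ f = {x ∈ C | ⟪w, x⟫ = 0}

/-- A facet of a cone: a maximal face. -/
def IsFacetCone (n : ℕ) (C f : Set (EuclideanSpace ℝ (Fin n))) : Prop :=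
  IsFaceCone n C f ∧ ∀ g, IsFaceCone n C g → f ⊆ g → g = f

/-- The link `Lk(g;P)` of a face `g` of the polyhedral cone `P = ⋂ᵢ {x | ⟪u i, x⟫ ≤ 0}`:
the intersection of the defining halfspaces whose bounding hyperplane contains `g`,
intersected with the orthogonal complement of the linear span `L(g)` of `g`. -/
def lkCone (n m : ℕ) (u : Fin m → EuclideanSpace ℝ (Fin n))
    (g : Set (EuclideanSpace ℝ (Fin n))) : Set (EuclideanSpace ℝ (Fin n)) :=
  (⋂ i ∈ {i : Fin m | ∀ x ∈ g, ⟪u i, x⟫ = 0}, {x : EuclideanSpace ℝ (Fin n) | ⟪u i, x⟫ ≤ 0}) ∩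
    ((Submodule.span ℝ g)ᗮ : Set (EuclideanSpace ℝ (Fin n)))

lemma auxZ {n m : ℕ} {u : Fin m → EuclideanSpace ℝ (Fin n)}
    {P e : Set (EuclideanSpace ℝ (Fin n))}
    (hP : P = ⋂ i, {x : EuclideanSpace ℝ (Fin n) | ⟪u i, x⟫ ≤ 0})
    (heP : e ⊆ P) (he0 : (0 : EuclideanSpace ℝ (Fin n)) ∈ e)
    (headd : ∀ x ∈ e, ∀ y ∈ e, x + y ∈ e) :
    ∃ z ∈ e, ∀ i : Fin m, ¬ (∀ x ∈ e, ⟪u i, x⟫ = 0) → ⟪u i, z⟫ < 0 := by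
  classical
  have hPle : ∀ x ∈ P, ∀ i, ⟪u i, x⟫ ≤ 0 := by
    intro x hx i
    rw [hP, Set.mem_iInter] at hx
    exact hx i
  have hch : ∀ i : Fin m, ∃ c, c ∈ e ∧ (¬ (∀ x ∈ e, ⟪u i, x⟫ = 0) → ⟪u i, c⟫ < 0) := by
    intro i
    by_cases h : ∀ x ∈ e, ⟪u i, x⟫ = 0
    · exact ⟨0, he0, fun h' => absurd h h'⟩
    · push_neg at h
      obtain ⟨c, hc, hne⟩ := h
      exact ⟨c, hc, fun _ => lt_of_le_of_ne (hPle c (heP hc) i) hne⟩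
  choose X hXe hXlt using hch
  refine ⟨∑ i, X i, ?_, ?_⟩
  · exact Finset.sum_induction X (· ∈ e) (fun a b ha hb => headd a ha b hb) he0
      (fun i _ => hXe i)
  · intro i hi
    rw [inner_sum]
    have hlt : ∑ j, ⟪u i, X j⟫ < ∑ _j : Fin m, (0 : ℝ) :=
      Finset.sum_lt_sum (fun j _ => hPle (X j) (heP (hXe j)) i)
        ⟨i, Finset.mem_univ i, by simpa using hXlt i hi⟩
    simpa using hlt

lemma auxExt {n m : ℕ} {u : Fin m → EuclideanSpace ℝ (Fin n)}
    {P e : Set (EuclideanSpace ℝ (Fin n))}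
    (hP : P = ⋂ i, {x : EuclideanSpace ℝ (Fin n) | ⟪u i, x⟫ ≤ 0})
    {z : EuclideanSpace ℝ (Fin n)} (hze : z ∈ e)
    (hz : ∀ i : Fin m, ¬ (∀ x ∈ e, ⟪u i, x⟫ = 0) → ⟪u i, z⟫ < 0)
    {x : EuclideanSpace ℝ (Fin n)}
    (hx : ∀ i : Fin m, (∀ y ∈ e, ⟪u i, y⟫ = 0) → ⟪u i, x⟫ ≤ 0) :
    ∃ t : ℝ, 0 < t ∧ z + t • x ∈ P := by
  classical
  set T : Finset (Fin m) := Finset.univ.filter (fun i => ¬ (∀ y ∈ e, ⟪u i, y⟫ = 0)) with hT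
  set r : Fin m → ℝ := fun i => (-⟪u i, z⟫) / (|⟪u i, x⟫| + 1) with hr
  set s : Finset ℝ := insert (1 : ℝ) (T.image r) with hs
  have hsne : s.Nonempty := ⟨1, by simp [hs]⟩
  have ht : 0 < s.min' hsne := by
    rw [Finset.lt_min'_iff]
    intro b hb
    rw [hs, Finset.mem_insert] at hb
    rcases hb with h1 | h2
    · simp [h1]
    · rcases Finset.mem_image.1 h2 with ⟨i, hi, rfl⟩
      have hi' : ¬ (∀ y ∈ e, ⟪u i, y⟫ = 0) := (Finset.mem_filter.1 hi).2
      have hb' := hz i hi'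
      have habs : (0 : ℝ) < |⟪u i, x⟫| + 1 := by positivity
      exact div_pos (by linarith) habs
  refine ⟨s.min' hsne, ht, ?_⟩
  rw [hP, Set.mem_iInter]
  intro i
  simp only [Set.mem_setOf_eq, inner_add_right, real_inner_smul_right]
  by_cases hiS : ∀ y ∈ e, ⟪u i, y⟫ = 0
  · have h1 : ⟪u i, z⟫ = 0 := hiS z hze
    have h2 : ⟪u i, x⟫ ≤ 0 := hx i hiS
    nlinarith
  · have hiT : i ∈ T := Finset.mem_filter.2 ⟨Finset.mem_univ _, hiS⟩
    have hle : s.min' hsne ≤ r i :=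
      Finset.min'_le _ _ (by rw [hs]; exact Finset.mem_insert_of_mem (Finset.mem_image_of_mem r hiT))
    have hbz : ⟪u i, z⟫ < 0 := hz i hiS
    have habs : ⟪u i, x⟫ ≤ |⟪u i, x⟫| := le_abs_self _
    have hd : (0 : ℝ) < |⟪u i, x⟫| + 1 := by positivity
    have hkey : s.min' hsne * (|⟪u i, x⟫| + 1) ≤ -⟪u i, z⟫ := by
      calc s.min' hsne * (|⟪u i, x⟫| + 1) ≤ r i * (|⟪u i, x⟫| + 1) := by nlinarith
      _ = -⟪u i, z⟫ := by rw [hr]; field_simp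
    nlinarith

lemma auxKer {n : ℕ} (w : EuclideanSpace ℝ (Fin n)) (s : Set (EuclideanSpace ℝ (Fin n)))
    (hs : ∀ y ∈ s, ⟪w, y⟫ = 0) : ∀ x ∈ Submodule.span ℝ s, ⟪w, x⟫ = 0 := by
  intro x hx
  induction hx using Submodule.span_induction with
  | mem y hy => exact hs y hy
  | zero => simp
  | add a b _ _ ha hb => rw [inner_add_right, ha, hb]; ring
  | smul c a _ ha => rw [real_inner_smul_right, ha]; ring

lemma auxSpan {n m : ℕ} {u : Fin m → EuclideanSpace ℝ (Fin n)}
    {P e : Set (EuclideanSpace ℝ (Fin n))}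
    (hP : P = ⋂ i, {x : EuclideanSpace ℝ (Fin n) | ⟪u i, x⟫ ≤ 0})
    {z : EuclideanSpace ℝ (Fin n)} (hze : z ∈ e) (hzP : z ∈ P)
    (hz : ∀ i : Fin m, ¬ (∀ x ∈ e, ⟪u i, x⟫ = 0) → ⟪u i, z⟫ < 0)
    {w0 : EuclideanSpace ℝ (Fin n)} (hz0 : ⟪w0, z⟫ = 0)
    {x : EuclideanSpace ℝ (Fin n)}
    (hx : ∀ i : Fin m, (∀ y ∈ e, ⟪u i, y⟫ = 0) → ⟪u i, x⟫ ≤ 0)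
    (hxw : ⟪w0, x⟫ = 0) :
    x ∈ Submodule.span ℝ {y ∈ P | ⟪w0, y⟫ = 0} := by
  obtain ⟨t, ht, hmem⟩ := auxExt hP hze hz hx
  have hy : z + t • x ∈ {y ∈ P | ⟪w0, y⟫ = 0} :=
    ⟨hmem, by rw [inner_add_right, real_inner_smul_right, hz0, hxw]; ring⟩
  have hzf : z ∈ {y ∈ P | ⟪w0, y⟫ = 0} := ⟨hzP, hz0⟩
  have hxe : x = t⁻¹ • ((z + t • x) - z) := by
    rw [add_sub_cancel_left, smul_smul, inv_mul_cancel₀ ht.ne', one_smul]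
  rw [hxe]
  exact Submodule.smul_mem _ _
    (Submodule.sub_mem _ (Submodule.subset_span hy) (Submodule.subset_span hzf))

/-- For an `n`-dimensional polyhedral cone `P ⊆ ℝⁿ` given by an irredundant
family of halfspaces, a face `f` of `P` and a face `e` of `f`, the set
`f_{(e;P)} = Lk(e;P) ∩ L(f)` is a face of the polytopal cone `Lk(e;P)`; and if `f` is a facet
of `P` then `f_{(e;P)}` is a facet of `Lk(e;P)`. -/
theorem stmt13 (n m : ℕ) (u : Fin m → EuclideanSpace ℝ (Fin n)) (hu : ∀ i, u i ≠ 0)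
    (P : Set (EuclideanSpace ℝ (Fin n)))
    (hP : P = ⋂ i, {x : EuclideanSpace ℝ (Fin n) | ⟪u i, x⟫ ≤ 0})
    (hirr : ∀ i : Fin m,
      (⋂ j ∈ {j : Fin m | j ≠ i}, {x : EuclideanSpace ℝ (Fin n) | ⟪u j, x⟫ ≤ 0}) ≠ P)
    (hfull : Submodule.span ℝ P = ⊤)
    (f e : Set (EuclideanSpace ℝ (Fin n)))
    (hf : IsFaceCone n P f) (he : IsFaceCone n f e) :
    IsFaceCone n (lkCone n m u e)
      (lkCone n m u e ∩ (Submodule.span ℝ f : Set (EuclideanSpace ℝ (Fin n)))) ∧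
    (IsFacetCone n P f → IsFacetCone n (lkCone n m u e)
      (lkCone n m u e ∩ (Submodule.span ℝ f : Set (EuclideanSpace ℝ (Fin n))))) := by
  classical
  obtain ⟨hfne, hfP, w, hw0, hwsupp, hfdef⟩ := hf
  obtain ⟨hene, hef, v, hv0, hvsupp, hedef⟩ := he
  have hPmem : ∀ x, x ∈ P ↔ ∀ i, ⟪u i, x⟫ ≤ 0 := by
    intro x; rw [hP]; simp [Set.mem_iInter]
  have hfmem : ∀ x, x ∈ f ↔ x ∈ P ∧ ⟪w, x⟫ = 0 := by
    intro x; rw [hfdef]; exact Iff.rfl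
  have hemem : ∀ x, x ∈ e ↔ x ∈ f ∧ ⟪v, x⟫ = 0 := by
    intro x; rw [hedef]; exact Iff.rfl
  have hfsubP : f ⊆ P := fun x hx => ((hfmem x).1 hx).1
  have hesubf : e ⊆ f := fun x hx => ((hemem x).1 hx).1
  have hesubP : e ⊆ P := fun x hx => hfsubP (hesubf hx)
  have hP0 : (0 : EuclideanSpace ℝ (Fin n)) ∈ P :=
    (hPmem 0).2 fun i => by simp
  have hf0 : (0 : EuclideanSpace ℝ (Fin n)) ∈ f :=
    (hfmem 0).2 ⟨hP0, inner_zero_right _⟩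
  have he0 : (0 : EuclideanSpace ℝ (Fin n)) ∈ e :=
    (hemem 0).2 ⟨hf0, inner_zero_right _⟩
  have headd : ∀ x ∈ e, ∀ y ∈ e, x + y ∈ e := by
    intro x hx y hy
    rw [hemem] at hx hy ⊢
    rw [hfmem] at *
    refine ⟨⟨(hPmem _).2 fun i => ?_, ?_⟩, ?_⟩
    · rw [inner_add_right]
      have h1 := (hPmem x).1 hx.1.1 i
      have h2 := (hPmem y).1 hy.1.1 i
      linarith
    · rw [inner_add_right, hx.1.2, hy.1.2]; ring
    · rw [inner_add_right, hx.2, hy.2]; ring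
  -- the special point z of e
  obtain ⟨z, hze, hzlt⟩ := auxZ hP hesubP he0 headd
  have hzP : z ∈ P := hesubP hze
  have hwz : ⟪w, z⟫ = 0 := ((hfmem z).1 (hesubf hze)).2
  -- membership in the link
  set E := Submodule.span ℝ e with hE
  have hLk : ∀ x, x ∈ lkCone n m u e ↔
      (∀ i : Fin m, (∀ y ∈ e, ⟪u i, y⟫ = 0) → ⟪u i, x⟫ ≤ 0) ∧ x ∈ Eᗮ := by
    intro x
    unfold lkCone
    rw [Set.mem_inter_iff, Set.mem_iInter₂]
    simp only [Set.mem_setOf_eq, SetLike.mem_coe, hE]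
  set Lk := lkCone n m u e with hLkdef
  -- support of w on Lk
  have hsupp : ∀ x ∈ Lk, ⟪w, x⟫ ≤ 0 := by
    intro x hx
    obtain ⟨t, ht, hmem⟩ := auxExt hP hze hzlt ((hLk x).1 hx).1
    have hle := hwsupp _ hmem
    rw [inner_add_right, real_inner_smul_right, hwz] at hle
    nlinarith
  -- the face equality
  have hwf : ∀ y ∈ f, ⟪w, y⟫ = 0 := fun y hy => ((hfmem y).1 hy).2
  have hAeq : Lk ∩ (Submodule.span ℝ f : Set (EuclideanSpace ℝ (Fin n)))
      = {x ∈ Lk | ⟪w, x⟫ = 0} := by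
    ext x
    constructor
    · rintro ⟨hxL, hxf⟩
      exact ⟨hxL, auxKer w f hwf x hxf⟩
    · rintro ⟨hxL, hxw⟩
      refine ⟨hxL, ?_⟩
      have hsp := auxSpan hP hze hzP hzlt hwz ((hLk x).1 hxL).1 hxw
      rwa [← hfdef] at hsp
  -- A is a proper subset of Lk
  obtain ⟨p, hpP, hpf⟩ : ∃ p, p ∈ P ∧ p ∉ f := by
    by_contra h; push_neg at h
    exact hfP (Set.Subset.antisymm hfsubP h)
  have hpw : ⟪w, p⟫ < 0 :=
    lt_of_le_of_ne (hwsupp p hpP) fun h => hpf ((hfmem p).2 ⟨hpP, h⟩)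
  have hprojmem : ∀ x : EuclideanSpace ℝ (Fin n),
      ((Submodule.orthogonalProjectionOnto E x : EuclideanSpace ℝ (Fin n))) ∈ E := fun x => SetLike.coe_mem _
  have hip : ∀ (w0 x : EuclideanSpace ℝ (Fin n)), (∀ y ∈ e, ⟪w0, y⟫ = 0) →
      ⟪w0, x - (Submodule.orthogonalProjectionOnto E x : EuclideanSpace ℝ (Fin n))⟫ = ⟪w0, x⟫ := by
    intro w0 x h0
    have h1 : ⟪w0, (Submodule.orthogonalProjectionOnto E x : EuclideanSpace ℝ (Fin n))⟫ = 0 :=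
      auxKer w0 e h0 _ (hprojmem x)
    rw [inner_sub_right, h1]; ring
  have hue : ∀ i : Fin m, (∀ y ∈ e, ⟪u i, y⟫ = 0) → ∀ y ∈ e, ⟪u i, y⟫ = 0 := fun i h => h
  have hx2L : ∀ x ∈ P, (x - (Submodule.orthogonalProjectionOnto E x : EuclideanSpace ℝ (Fin n))) ∈ Lk := by
    intro x hxP
    rw [hLk]
    refine ⟨fun i hi => ?_, Submodule.sub_starProjection_mem_orthogonal x⟩
    rw [hip (u i) x hi]
    exact (hPmem x).1 hxP i
  have hwe : ∀ y ∈ e, ⟪w, y⟫ = 0 := fun y hy => hwf y (hesubf hy)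
  have hAne : Lk ∩ (Submodule.span ℝ f : Set (EuclideanSpace ℝ (Fin n))) ≠ Lk := by
    intro h
    set p2 := p - (Submodule.orthogonalProjectionOnto E p : EuclideanSpace ℝ (Fin n)) with hp2
    have hp2L : p2 ∈ Lk := hx2L p hpP
    have hp2w : ⟪w, p2⟫ < 0 := by rw [hp2, hip w p hwe]; exact hpw
    have hmem : p2 ∈ Lk ∩ (Submodule.span ℝ f : Set (EuclideanSpace ℝ (Fin n))) := by
      rw [h]; exact hp2L
    rw [hAeq] at hmem
    exact absurd hmem.2 hp2w.ne
  have h0A : (0 : EuclideanSpace ℝ (Fin n)) ∈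
      Lk ∩ (Submodule.span ℝ f : Set (EuclideanSpace ℝ (Fin n))) := by
    refine ⟨(hLk 0).2 ⟨fun i _ => by simp, Submodule.zero_mem _⟩, Submodule.zero_mem _⟩
  have hfaceA : IsFaceCone n Lk
      (Lk ∩ (Submodule.span ℝ f : Set (EuclideanSpace ℝ (Fin n)))) :=
    ⟨⟨0, h0A⟩, hAne, w, hw0, hsupp, hAeq⟩
  refine ⟨hfaceA, fun hfacet => ⟨hfaceA, ?_⟩⟩
  -- facet case
  intro g hg hAg
  obtain ⟨hgne, hgLk, w2, hw20, hw2supp, hgdef⟩ := hg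
  set w3 := w2 - (Submodule.orthogonalProjectionOnto E w2 : EuclideanSpace ℝ (Fin n)) with hw3
  have hw3o : w3 ∈ Eᗮ := Submodule.sub_starProjection_mem_orthogonal w2
  have hw3x : ∀ x ∈ Eᗮ, ⟪w3, x⟫ = ⟪w2, x⟫ := by
    intro x hx
    have h1 : ⟪(Submodule.orthogonalProjectionOnto E w2 : EuclideanSpace ℝ (Fin n)), x⟫ = 0 :=
      (Submodule.mem_orthogonal E x).1 hx _ (hprojmem w2)
    rw [hw3, inner_sub_left, h1]; ring
  have hw30 : w3 ≠ 0 := by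
    intro h0
    apply hgLk
    rw [hgdef]
    apply Set.Subset.antisymm (Set.sep_subset _ _)
    intro x hx
    refine ⟨hx, ?_⟩
    rw [← hw3x x ((hLk x).1 hx).2, h0, inner_zero_left]
  have hw3eq : ∀ x : EuclideanSpace ℝ (Fin n),
      ⟪w3, x⟫ = ⟪w2, x - (Submodule.orthogonalProjectionOnto E x : EuclideanSpace ℝ (Fin n))⟫ := by
    intro x
    have h1 : ∀ y ∈ e, ⟪w3, y⟫ = 0 := by
      intro y hy
      rw [real_inner_comm]
      exact (Submodule.mem_orthogonal E w3).1 hw3o y (Submodule.subset_span hy)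
    rw [← hip w3 x h1]
    exact hw3x _ (Submodule.sub_starProjection_mem_orthogonal x)
  have hw3supp : ∀ x ∈ P, ⟪w3, x⟫ ≤ 0 := by
    intro x hxP
    rw [hw3eq x]
    exact hw2supp _ (hx2L x hxP)
  have hfg' : f ⊆ {x ∈ P | ⟪w3, x⟫ = 0} := by
    intro x hxf
    refine ⟨hfsubP hxf, ?_⟩
    have hx2f : (x - (Submodule.orthogonalProjectionOnto E x : EuclideanSpace ℝ (Fin n)))
        ∈ Submodule.span ℝ f :=
      Submodule.sub_mem _ (Submodule.subset_span hxf)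
        (Submodule.span_mono hesubf (hprojmem x))
    have hx2g : (x - (Submodule.orthogonalProjectionOnto E x : EuclideanSpace ℝ (Fin n))) ∈ g :=
      hAg ⟨hx2L x (hfsubP hxf), hx2f⟩
    rw [hgdef] at hx2g
    rw [hw3eq x]
    exact hx2g.2
  have hg'P : {x ∈ P | ⟪w3, x⟫ = 0} ≠ P := by
    intro hEq
    apply hw30
    have hall : ∀ x ∈ P, ⟪w3, x⟫ = 0 := by
      intro x hx
      have : x ∈ {x ∈ P | ⟪w3, x⟫ = 0} := hEq.symm ▸ hx
      exact this.2
    have hspan : ∀ x ∈ Submodule.span ℝ P, ⟪w3, x⟫ = 0 := auxKer w3 P hall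
    have := hspan w3 (by rw [hfull]; trivial)
    exact inner_self_eq_zero.1 this
  have hg'face : IsFaceCone n P {x ∈ P | ⟪w3, x⟫ = 0} :=
    ⟨⟨0, hP0, inner_zero_right _⟩, hg'P, w3, hw30, hw3supp, rfl⟩
  have hg'f : {x ∈ P | ⟪w3, x⟫ = 0} = f := hfacet.2 _ hg'face hfg'
  apply Set.Subset.antisymm ?_ hAg
  intro x hxg
  rw [hgdef] at hxg
  obtain ⟨hxL, hxw2⟩ := hxg
  have hxE : x ∈ Eᗮ := ((hLk x).1 hxL).2
  have hxw3 : ⟪w3, x⟫ = 0 := by rw [hw3x x hxE]; exact hxw2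
  have hz3 : ⟪w3, z⟫ = 0 := by
    have hzf' : z ∈ {x ∈ P | ⟪w3, x⟫ = 0} := hg'f.symm ▸ hesubf hze
    exact hzf'.2
  have hxspan := auxSpan hP hze hzP hzlt hz3 ((hLk x).1 hxL).1 hxw3
  rw [hg'f] at hxspan
  exact ⟨hxL, hxspan⟩
end
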